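/- For every natural number n ≥ 1, (∏_{k=1}^{2n−1} (2k − 1)) / (2n)! ≥ 2^{−n}. Equivalently, with ε* := 1 − 1/(2√2), the ratio ∏_{k=1}^{2n−1}(2k−1) / (2n)! is at least (2(1 − ε*))^{2n} for all n ≥ 1. -/

import Mathlib

lemma stmt8_aux (n : ℕ) (hn : 1 ≤ n) :
    ((2 : ℝ)⁻¹) ^ n * ((2 * n).factorial : ℝ) ≤
      ∏ k ∈ Finset.Icc 1 (2 * n - 1), ((2 * k - 1 : ℕ) : ℝ) := by
  induction n, hn using Nat.le_induction with
  | base => norm_num [Nat.factorial]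
  | succ n hn ih =>
    have h1 : 2 * (n + 1) - 1 = (2 * n - 1) + 1 + 1 := by omega
    have h2 : 2 * n - 1 + 1 = 2 * n := by omega
    rw [h1, Finset.prod_Icc_succ_top (by omega), Finset.prod_Icc_succ_top (by omega), h2]
    have hf : ((2 * (n + 1)).factorial : ℝ)
        = (2 * n + 2) * ((2 * n + 1) * ((2 * n).factorial : ℝ)) := by
      have : 2 * (n + 1) = (2 * n + 1) + 1 := by omega
      rw [this, Nat.factorial_succ, Nat.factorial_succ]
      push_cast; ring
    have hc1 : ((2 * (2 * n) - 1 : ℕ) : ℝ) = 4 * (n : ℝ) - 1 := by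
      have : (2 * (2 * n) - 1 : ℕ) = 4 * n - 1 := by ring_nf
      rw [this, Nat.cast_sub (by omega)]; push_cast; ring
    have hc2 : ((2 * (2 * n + 1) - 1 : ℕ) : ℝ) = 4 * (n : ℝ) + 1 := by
      have : (2 * (2 * n + 1) - 1 : ℕ) = 4 * n + 1 := by omega
      rw [this]; push_cast; ring
    rw [hf, hc1, hc2, pow_succ]
    have hfac : (0 : ℝ) < ((2 * n).factorial : ℝ) := by positivity
    have hn' : (1 : ℝ) ≤ (n : ℝ) := by exact_mod_cast hn
    have key : (2:ℝ)⁻¹ * ((2 * (n:ℝ) + 2) * (2 * n + 1)) ≤ (4 * n - 1) * (4 * n + 1) := by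
      nlinarith
    calc (2:ℝ)⁻¹ ^ n * 2⁻¹ * ((2 * (n:ℝ) + 2) * ((2 * n + 1) * ((2 * n).factorial : ℝ)))
        = ((2:ℝ)⁻¹ ^ n * ((2 * n).factorial : ℝ)) * ((2:ℝ)⁻¹ * ((2 * n + 2) * (2 * n + 1))) := by
          ring
      _ ≤ ((2:ℝ)⁻¹ ^ n * ((2 * n).factorial : ℝ)) * ((4 * n - 1) * (4 * n + 1)) := by
          apply mul_le_mul_of_nonneg_left key; positivity
      _ ≤ (∏ k ∈ Finset.Icc 1 (2 * n - 1), ((2 * k - 1 : ℕ) : ℝ)) * ((4 * n - 1) * (4 * n + 1)) := by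
          apply mul_le_mul_of_nonneg_right ih; nlinarith
      _ = (∏ k ∈ Finset.Icc 1 (2 * n - 1), ((2 * k - 1 : ℕ) : ℝ)) * (4 * n - 1) * (4 * n + 1) := by
          ring

/-- key combinatorial lemma in the proof of Theorem 3. For every `n ≥ 1`,
`(∏_{k=1}^{2n-1} (2k-1)) / (2n)! ≥ 2^{-n}`; equivalently, with `ε* = 1 - 1/(2√2)`, the
ratio is at least `(2(1-ε*))^{2n}`. -/
theorem stmt8 (n : ℕ) (hn : 1 ≤ n) :
    ((2 : ℝ)⁻¹) ^ n ≤
      (∏ k ∈ Finset.Icc 1 (2 * n - 1), ((2 * k - 1 : ℕ) : ℝ)) / ((2 * n).factorial : ℝ) ∧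
    (2 * (1 - (1 - 1 / (2 * Real.sqrt 2)))) ^ (2 * n) ≤
      (∏ k ∈ Finset.Icc 1 (2 * n - 1), ((2 * k - 1 : ℕ) : ℝ)) / ((2 * n).factorial : ℝ) := by
  have hfac : (0 : ℝ) < ((2 * n).factorial : ℝ) := by positivity
  have h1 : ((2 : ℝ)⁻¹) ^ n ≤
      (∏ k ∈ Finset.Icc 1 (2 * n - 1), ((2 * k - 1 : ℕ) : ℝ)) / ((2 * n).factorial : ℝ) := by
    rw [le_div_iff₀ hfac]
    exact stmt8_aux n hn
  refine ⟨h1, ?_⟩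
  have hs : (0 : ℝ) < Real.sqrt 2 := Real.sqrt_pos.mpr (by norm_num)
  have heq : (2 * (1 - (1 - 1 / (2 * Real.sqrt 2)))) ^ (2 * n) = ((2 : ℝ)⁻¹) ^ n := by
    have : 2 * (1 - (1 - 1 / (2 * Real.sqrt 2))) = (Real.sqrt 2)⁻¹ := by
      field_simp
      ring
    have h2 : ((Real.sqrt 2)⁻¹) ^ 2 = (2:ℝ)⁻¹ := by
      rw [sq, ← mul_inv, Real.mul_self_sqrt (by norm_num : (0:ℝ) ≤ 2)]
    rw [this, pow_mul, h2]
  rw [heq]; exact h1
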